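/- Let ψ_ε(t) = ∫_0^t φ_ε(s)/(s·log^Q(1/s)) ds for t ∈ (0, 1/e), where φ_ε(s) = 1/(1 + ε·2^{1/s}) and Q > 1, ε > 0. Then for all t ∈ (0, 1/e): ψ_ε(t) ≤ φ_ε(t)^{(Q−1)/Q} / ((Q−1)·log^{Q−1}(1/t)). -/

import Mathlib

open MeasureTheory Set Filter Real Topology

/-- `φ_ε(s) = 1/(1 + ε·2^{1/s})`. -/
noncomputable def phiE (ε s : ℝ) : ℝ := 1 / (1 + ε * (2:ℝ) ^ (1/s))

/-- `ψ_ε(t) = ∫₀ᵗ φ_ε(s)/(s·log^Q(1/s)) ds`. -/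
noncomputable def psiE (ε Q t : ℝ) : ℝ :=
  ∫ s in (0:ℝ)..t, phiE ε s / (s * (Real.log (1/s)) ^ Q)

section aux

variable {Q ε : ℝ}

/-- the derivative of the antiderivative -/
lemma hasDerivAt_gE (hQ : 1 < Q) {x : ℝ} (hx : 0 < x) (hx1 : x < 1) :
    HasDerivAt (fun s => (Q-1)⁻¹ * (Real.log (1/s)) ^ (1-Q))
      (1 / (x * (Real.log (1/x)) ^ Q)) x := by
  have hlx : 0 < Real.log (1/x) := Real.log_pos (by
    rw [one_div]
    exact ((one_lt_inv₀ hx).mpr hx1))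
  have hlog : HasDerivAt (fun s : ℝ => Real.log (1/s)) (-(x⁻¹)) x := by
    have h1 : (fun s : ℝ => Real.log (1/s)) = fun s : ℝ => -Real.log s := by
      funext s; rw [one_div, Real.log_inv]
    rw [h1]
    exact (Real.hasDerivAt_log hx.ne').neg
  have h2 := (hlog.rpow_const (p := 1-Q) (Or.inl hlx.ne')).const_mul ((Q-1)⁻¹)
  refine h2.congr_deriv ?_
  have h3 : (1 - Q - 1) = -Q := by ring
  rw [h3, Real.rpow_neg hlx.le]
  have hQ0 : (Real.log (1/x)) ^ Q ≠ 0 := by positivity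
  have hQ1 : Q - 1 ≠ 0 := by intro h; linarith [hQ]
  field_simp
  ring

lemma contOn_kE (hQ : 1 < Q) {a b : ℝ} (ha : 0 < a) (hb : b < 1) :
    ContinuousOn (fun s => 1 / (s * (Real.log (1/s)) ^ Q)) (Icc a b) := by
  intro x hx
  have hx0 : 0 < x := lt_of_lt_of_le ha hx.1
  have hx1 : x < 1 := lt_of_le_of_lt hx.2 hb
  have hlx : 0 < Real.log (1/x) := Real.log_pos (by rw [one_div]; exact (one_lt_inv₀ hx0).mpr hx1)
  apply ContinuousWithinAt.div continuousWithinAt_const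
  · apply ContinuousWithinAt.mul continuousWithinAt_id
    refine ContinuousWithinAt.rpow_const ?_ (Or.inl hlx.ne')
    apply ContinuousWithinAt.log
    · exact continuousWithinAt_const.div continuousWithinAt_id hx0.ne'
    · positivity
  · have : 0 < x * (Real.log (1/x)) ^ Q := by positivity
    exact this.ne'

lemma contOn_phiE (hε : 0 < ε) {a b : ℝ} (ha : 0 < a) :
    ContinuousOn (fun s => phiE ε s) (Icc a b) := by
  intro x hx
  have hx0 : 0 < x := lt_of_lt_of_le ha hx.1
  unfold phiE
  apply ContinuousWithinAt.div continuousWithinAt_const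
  · apply ContinuousWithinAt.add continuousWithinAt_const
    apply ContinuousWithinAt.mul continuousWithinAt_const
    apply ContinuousWithinAt.rpow continuousWithinAt_const
      (continuousWithinAt_const.div continuousWithinAt_id hx0.ne')
    exact Or.inl two_ne_zero
  · have h2 : (0:ℝ) < (2:ℝ) ^ (1/x) := Real.rpow_pos_of_pos two_pos _
    have : 0 < 1 + ε * (2:ℝ) ^ (1/x) := by positivity
    exact this.ne'

lemma phiE_pos (hε : 0 < ε) (s : ℝ) : 0 < phiE ε s := by
  unfold phiE
  have h2 : (0:ℝ) < (2:ℝ) ^ (1/s) := Real.rpow_pos_of_pos two_pos _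
  positivity

lemma phiE_le_one (hε : 0 < ε) (s : ℝ) : phiE ε s ≤ 1 := by
  unfold phiE
  have h2 : (0:ℝ) < (2:ℝ) ^ (1/s) := Real.rpow_pos_of_pos two_pos _
  rw [div_le_one (by positivity)]
  nlinarith

lemma phiE_mono (hε : 0 < ε) {s t : ℝ} (hs : 0 < s) (hst : s ≤ t) :
    phiE ε s ≤ phiE ε t := by
  unfold phiE
  have ht0 : 0 < t := lt_of_lt_of_le hs hst
  have h1 : 1/t ≤ 1/s := one_div_le_one_div_of_le hs hst
  have h2 : (2:ℝ) ^ (1/t) ≤ (2:ℝ) ^ (1/s) :=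
    Real.rpow_le_rpow_of_exponent_le one_le_two h1
  have h3 : (0:ℝ) < (2:ℝ) ^ (1/t) := Real.rpow_pos_of_pos two_pos _
  apply one_div_le_one_div_of_le (by positivity)
  nlinarith

end aux

theorem stmt11 (Q ε : ℝ) (hQ : 1 < Q) (hε : 0 < ε) :
    ∀ t ∈ Set.Ioo (0:ℝ) (Real.exp (-1)),
      psiE ε Q t ≤ phiE ε t ^ ((Q - 1)/Q) / ((Q - 1) * (Real.log (1/t)) ^ (Q - 1)) := by
  rintro t ⟨ht0, hte⟩
  have ht1 : t < 1 := hte.trans (by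
    rw [Real.exp_lt_one_iff]; norm_num)
  have hL : 0 < Real.log (1/t) := Real.log_pos (by rw [one_div]; exact (one_lt_inv₀ ht0).mpr ht1)
  set f0 : ℝ → ℝ := fun s => phiE ε s / (s * (Real.log (1/s)) ^ Q) with hf0
  set k : ℝ → ℝ := fun s => 1 / (s * (Real.log (1/s)) ^ Q) with hk
  set g : ℝ → ℝ := fun s => (Q-1)⁻¹ * (Real.log (1/s)) ^ (1-Q) with hg
  set C : ℝ := phiE ε t ^ ((Q - 1)/Q) with hC
  have hC0 : 0 < C := Real.rpow_pos_of_pos (phiE_pos hε t) _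
  -- pointwise bound on (0, t]
  have hbound : ∀ s ∈ Ioc (0:ℝ) t, f0 s ≤ C * k s := by
    rintro s ⟨hs0, hst⟩
    have h1 : phiE ε s ≤ phiE ε t := phiE_mono hε hs0 hst
    have h2 : phiE ε t ≤ C := by
      rw [hC]
      calc phiE ε t = phiE ε t ^ (1:ℝ) := (Real.rpow_one _).symm
        _ ≤ phiE ε t ^ ((Q-1)/Q) := by
            apply Real.rpow_le_rpow_of_exponent_ge (phiE_pos hε t) (phiE_le_one hε t)
            rw [div_le_one (by linarith)]; linarith
    have hs1 : s < 1 := lt_of_le_of_lt hst ht1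
    have hls : 0 < Real.log (1/s) := Real.log_pos (by rw [one_div]; exact (one_lt_inv₀ hs0).mpr hs1)
    have hden : 0 < s * (Real.log (1/s)) ^ Q := by positivity
    simp only [hf0, hk]
    rw [div_le_iff₀ hden]
    have heq : C * (1 / (s * (Real.log (1/s)) ^ Q)) * (s * (Real.log (1/s)) ^ Q) = C := by
      field_simp
    rw [heq]
    linarith
  have hf0nn : ∀ s ∈ Ioc (0:ℝ) t, 0 ≤ f0 s := by
    rintro s ⟨hs0, hst⟩
    have hs1 : s < 1 := lt_of_le_of_lt hst ht1
    have hls : 0 < Real.log (1/s) := Real.log_pos (by rw [one_div]; exact (one_lt_inv₀ hs0).mpr hs1)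
    have := phiE_pos hε s
    have hden : 0 < s * (Real.log (1/s)) ^ Q := by positivity
    positivity
  -- the approximating sequence
  set a : ℕ → ℝ := fun n => t / (n+1) with ha
  have ha0 : ∀ n, 0 < a n := fun n => by positivity
  have hat : ∀ n, a n ≤ t := fun n => by
    rw [ha]
    rw [div_le_iff₀ (by positivity)]
    nlinarith [Nat.cast_nonneg (α := ℝ) n]
  have ha_tendsto : Tendsto a atTop (𝓝 0) := by
    have := tendsto_one_div_add_atTop_nhds_zero_nat (𝕜 := ℝ)
    have h2 := this.const_mul t
    simp only [mul_zero] at h2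
    convert h2 using 2 with n
    rw [ha]; ring
  -- FTC on [a n, t]
  have hkint : ∀ n, IntervalIntegrable k volume (a n) t := fun n =>
    (contOn_kE hQ (ha0 n) ht1).intervalIntegrable_of_Icc (hat n)
  have hftc : ∀ n, ∫ s in (a n)..t, k s = g t - g (a n) := by
    intro n
    apply intervalIntegral.integral_eq_sub_of_hasDerivAt
    · intro x hx
      rw [uIcc_of_le (hat n)] at hx
      exact hasDerivAt_gE hQ (lt_of_lt_of_le (ha0 n) hx.1) (lt_of_le_of_lt hx.2 ht1)
    · exact hkint n
  have hg_nonneg : ∀ n, 0 ≤ g (a n) := by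
    intro n
    rw [hg]
    have h1 : (0:ℝ) ≤ Real.log (1/(a n)) := Real.log_nonneg (by
      rw [one_div, le_inv_comm₀ (by norm_num) (ha0 n)]
      simpa using ((hat n).trans ht1.le))
    have h2 : (0:ℝ) ≤ (Q-1)⁻¹ := by
      rw [inv_nonneg]; linarith
    exact mul_nonneg h2 (Real.rpow_nonneg h1 _)
  -- integrability of f0 on each Ioc (a n) t
  have hf0cont : ∀ n, ContinuousOn f0 (Icc (a n) t) := by
    intro n
    have h := (contOn_phiE hε (ha0 n)).mul (contOn_kE hQ (ha0 n) ht1)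
    exact h.congr (fun x _ => by simp only [hf0, hk, Pi.mul_apply, mul_one_div])
  have hf0i : ∀ n, IntegrableOn f0 (Ioc (a n) t) := fun n =>
    ((hf0cont n).integrableOn_Icc).mono_set Ioc_subset_Icc_self
  have hCk_int : ∀ n, IntegrableOn (fun s => C * k s) (Ioc (a n) t) := fun n =>
    (((contOn_kE hQ (ha0 n) ht1).integrableOn_Icc).mono_set Ioc_subset_Icc_self).const_mul C
  have hIoc_sub : ∀ n, Ioc (a n) t ⊆ Ioc 0 t := fun n => Ioc_subset_Ioc_left (ha0 n).le
  have hIbound : ∀ n, ∫ s in Ioc (a n) t, f0 s ≤ C * g t := by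
    intro n
    calc ∫ s in Ioc (a n) t, f0 s
        ≤ ∫ s in Ioc (a n) t, C * k s :=
          setIntegral_mono_on (hf0i n) (hCk_int n) measurableSet_Ioc
            (fun s hs => hbound s (hIoc_sub n hs))
      _ = C * ∫ s in Ioc (a n) t, k s := integral_const_mul _ _
      _ = C * (g t - g (a n)) := by
          rw [← intervalIntegral.integral_of_le (hat n), hftc n]
      _ ≤ C * g t := by nlinarith [hg_nonneg n, hC0]
  have hf0I : IntegrableOn f0 (Ioc 0 t) := by
    apply integrableOn_Ioc_of_intervalIntegral_norm_bounded_left hf0i ha_tendsto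
    filter_upwards with n
    have heq : ∫ s in Ioc (a n) t, ‖f0 s‖ = ∫ s in Ioc (a n) t, f0 s :=
      setIntegral_congr_fun measurableSet_Ioc
        (fun s hs => Real.norm_of_nonneg (hf0nn s (hIoc_sub n hs)))
    rw [heq]; exact hIbound n
  have hUnion : (⋃ n, Ioc (a n) t) = Ioc 0 t := by
    ext x
    simp only [mem_iUnion, mem_Ioc]
    constructor
    · rintro ⟨n, h1, h2⟩; exact ⟨(ha0 n).trans h1, h2⟩
    · rintro ⟨h1, h2⟩
      obtain ⟨n, hn⟩ := exists_nat_gt (t / x)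
      refine ⟨n, ?_, h2⟩
      rw [ha]
      rw [div_lt_iff₀ (by positivity)]
      have h3 := (div_lt_iff₀ h1).mp (hn.trans (lt_add_one (n:ℝ)))
      linarith
  have hmono : Monotone (fun n => Ioc (a n) t) := by
    intro m n hmn
    apply Ioc_subset_Ioc_left
    rw [ha]
    have hmn' : (m:ℝ) ≤ (n:ℝ) := by exact_mod_cast hmn
    apply div_le_div_of_nonneg_left ht0.le (by positivity)
    linarith
  have htends := tendsto_setIntegral_of_monotone (fun n => measurableSet_Ioc) hmono
    (hUnion ▸ hf0I)
  rw [hUnion] at htends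
  have hle : ∫ s in Ioc 0 t, f0 s ≤ C * g t :=
    le_of_tendsto htends (Filter.Eventually.of_forall hIbound)
  have hpsi : psiE ε Q t = ∫ s in Ioc 0 t, f0 s := by
    rw [psiE, intervalIntegral.integral_of_le ht0.le]
  rw [hpsi]
  refine hle.trans ?_
  apply le_of_eq
  simp only [hg, hC]
  have h1Q : (1 - Q) = -(Q-1) := by ring
  rw [h1Q, Real.rpow_neg hL.le]
  have hX : (Real.log (1/t)) ^ (Q-1) ≠ 0 := by positivity
  have hQ1 : Q - 1 ≠ 0 := by intro h; linarith
  field_simp
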